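/- Let ρ, b, σ, c* be positive real numbers, let k ∈ ℝ satisfy k² + (1 + 2b/σ²)k − 2ρ/σ² = 0, and set b̃ = 2(k + 1 + b/σ²). Suppose 𝒥 : (0,∞) → ℝ is twice differentiable and satisfies the degenerate hypergeometric equation y·𝒥''(y) + (b̃ − y)·𝒥'(y) − k·𝒥(y) = 0 for all y > 0. Then the function w(x) = x^{−k}·𝒥(2(1+c*)/(σ² x)) is twice differentiable on (0,∞) and satisfies ρ·w(x) + (b x − (1+c*))·w'(x) − (1/2)σ² x²·w''(x) = 0 for all x > 0. -/

import Mathlib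

open Real Set

private lemma rpow_mul_inv_sq (x : ℝ) (hx : 0 < x) (m : ℝ) :
    x ^ m * (x ^ 2)⁻¹ = x ^ (m - 2) := by
  rw [show m - 2 = m + ((-2 : ℤ) : ℝ) by push_cast; ring, Real.rpow_add hx,
    Real.rpow_intCast, zpow_neg]
  norm_num

private lemma rpow_sub_nat' (x : ℝ) (hx : 0 < x) (k : ℝ) (n : ℕ) :
    x ^ (-k - n) = x ^ (-k) * (x ^ n)⁻¹ := by
  rw [show -k - n = -k + ((-n : ℤ) : ℝ) by push_cast; ring, Real.rpow_add hx,
    Real.rpow_intCast, zpow_neg, zpow_natCast]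

private lemma aux_hasDerivAt (A m : ℝ) (f : ℝ → ℝ) (t : ℝ) (ht : 0 < t)
    (hf : DifferentiableAt ℝ f (A / t)) :
    HasDerivAt (fun t => t ^ m * f (A / t))
      (m * t ^ (m - 1) * f (A / t) - A * t ^ (m - 2) * deriv f (A / t)) t := by
  have ht0 : t ≠ 0 := ht.ne'
  have hinner : HasDerivAt (fun t : ℝ => A / t) (A * -(t ^ 2)⁻¹) t := by
    simpa [div_eq_mul_inv] using (hasDerivAt_inv ht0).const_mul A
  have hcomp : HasDerivAt (fun t => f (A / t)) (deriv f (A / t) * (A * -(t ^ 2)⁻¹)) t :=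
    hf.hasDerivAt.comp t hinner
  have hpow : HasDerivAt (fun t : ℝ => t ^ m) (m * t ^ (m - 1)) t :=
    Real.hasDerivAt_rpow_const (Or.inl ht0)
  refine (hpow.mul hcomp).congr_deriv ?_
  rw [← rpow_mul_inv_sq t ht m]; ring

/-- The change of variables `w(x) = x^{-k} 𝒥(2(1+c*)/(σ²x))` transforms a solution `𝒥` of the
degenerate hypergeometric equation into a solution of the linearized shallow lake ODE. -/
theorem tricomi_transform_solves_linearized_ode
    (ρ b σ cstar k btilde : ℝ)
    (hρ : 0 < ρ) (hb : 0 < b) (hσ : 0 < σ) (hcstar : 0 < cstar)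
    (hroot : k ^ 2 + (1 + 2 * b / σ ^ 2) * k - 2 * ρ / σ ^ 2 = 0)
    (hbt : btilde = 2 * (k + 1 + b / σ ^ 2))
    (J : ℝ → ℝ)
    (hJ : ∀ y > (0:ℝ), DifferentiableAt ℝ J y)
    (hJ' : ∀ y > (0:ℝ), DifferentiableAt ℝ (deriv J) y)
    (hJode : ∀ y > (0:ℝ),
      y * deriv (deriv J) y + (btilde - y) * deriv J y - k * J y = 0)
    (w : ℝ → ℝ)
    (hw : ∀ x, w x = x ^ (-k) * J (2 * (1 + cstar) / (σ ^ 2 * x))) :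
    ∀ x > (0:ℝ), DifferentiableAt ℝ w x ∧ DifferentiableAt ℝ (deriv w) x ∧
      ρ * w x + (b * x - (1 + cstar)) * deriv w x
        - (1 / 2) * σ ^ 2 * x ^ 2 * deriv (deriv w) x = 0 := by
  intro x hx
  have hx0 : x ≠ 0 := hx.ne'
  have hσ0 : σ ≠ 0 := hσ.ne'
  set A : ℝ := 2 * (1 + cstar) / σ ^ 2 with hA
  have hApos : 0 < A := by rw [hA]; positivity
  have hwfun : w = fun t => t ^ (-k) * J (A / t) := by
    funext t; rw [hw t, hA, div_div]
  have hJd : ∀ t : ℝ, 0 < t → DifferentiableAt ℝ J (A / t) :=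
    fun t ht => hJ _ (div_pos hApos ht)
  have hJd' : ∀ t : ℝ, 0 < t → DifferentiableAt ℝ (deriv J) (A / t) :=
    fun t ht => hJ' _ (div_pos hApos ht)
  have hD1 : ∀ t : ℝ, 0 < t → HasDerivAt w
      (-k * t ^ (-k - 1) * J (A / t) - A * t ^ (-k - 2) * deriv J (A / t)) t := by
    intro t ht
    rw [hwfun]
    exact aux_hasDerivAt A (-k) J t ht (hJd t ht)
  have hD2 : ∀ t : ℝ, 0 < t → HasDerivAt
      (fun t => -k * t ^ (-k - 1) * J (A / t) - A * t ^ (-k - 2) * deriv J (A / t))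
      (k * (k + 1) * t ^ (-k - 2) * J (A / t)
        + A * (2 * k + 2) * t ^ (-k - 3) * deriv J (A / t)
        + A ^ 2 * t ^ (-k - 4) * deriv (deriv J) (A / t)) t := by
    intro t ht
    have h1 := (aux_hasDerivAt A (-k - 1) J t ht (hJd t ht)).const_mul (-k)
    have h2 := (aux_hasDerivAt A (-k - 2) (deriv J) t ht (hJd' t ht)).const_mul A
    have h3 := h1.sub h2
    have hfeq : (fun t : ℝ => -k * t ^ (-k - 1) * J (A / t) - A * t ^ (-k - 2) * deriv J (A / t))
        = fun t : ℝ => -k * (t ^ (-k - 1) * J (A / t)) - A * (t ^ (-k - 2) * deriv J (A / t)) := by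
      funext t; ring
    rw [hfeq]
    refine h3.congr_deriv ?_
    rw [show -k - 1 - 1 = -k - 2 by ring, show -k - 1 - 2 = -k - 3 by ring,
      show -k - 2 - 1 = -k - 3 by ring, show -k - 2 - 2 = -k - 4 by ring]
    ring
  have hev : deriv w =ᶠ[nhds x]
      (fun t => -k * t ^ (-k - 1) * J (A / t) - A * t ^ (-k - 2) * deriv J (A / t)) :=
    Filter.eventually_of_mem (isOpen_Ioi.mem_nhds hx) (fun t ht => (hD1 t ht).deriv)
  have hdw : deriv w x = -k * x ^ (-k - 1) * J (A / x) - A * x ^ (-k - 2) * deriv J (A / x) :=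
    (hD1 x hx).deriv
  have hddw : deriv (deriv w) x = k * (k + 1) * x ^ (-k - 2) * J (A / x)
      + A * (2 * k + 2) * x ^ (-k - 3) * deriv J (A / x)
      + A ^ 2 * x ^ (-k - 4) * deriv (deriv J) (A / x) := by
    rw [hev.deriv_eq]; exact (hD2 x hx).deriv
  refine ⟨(hD1 x hx).differentiableAt,
    (hD2 x hx).differentiableAt.congr_of_eventuallyEq hev, ?_⟩
  have e1 : x ^ (-k - 1) = x ^ (-k) * (x ^ 1)⁻¹ := by simpa using rpow_sub_nat' x hx k 1
  have e2 : x ^ (-k - 2) = x ^ (-k) * (x ^ 2)⁻¹ := by simpa using rpow_sub_nat' x hx k 2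
  have e3 : x ^ (-k - 3) = x ^ (-k) * (x ^ 3)⁻¹ := by simpa using rpow_sub_nat' x hx k 3
  have e4 : x ^ (-k - 4) = x ^ (-k) * (x ^ 4)⁻¹ := by simpa using rpow_sub_nat' x hx k 4
  have key := hJode (A / x) (div_pos hApos hx)
  rw [hbt] at key
  rw [hw x, show 2 * (1 + cstar) / (σ ^ 2 * x) = A / x by rw [hA, div_div],
    hdw, hddw, e1, e2, e3, e4]
  rw [hA] at key ⊢
  linear_combination (norm := (field_simp; ring))
    (-(σ ^ 2 / 2) * x ^ (-k) * J (2 * (1 + cstar) / σ ^ 2 / x)) * hroot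
    + (-(1 + cstar) * x ^ (-k) * x⁻¹) * key
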